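/- In an LMSR tree T with market state θ_ω(T) = Σ_{z ∋ ω} s_z, the root's partial normalization constant satisfies N·S_root = Σ_{ω∈Ω} e^{θ_ω(T)/b}. -/

import Mathlib

inductive LTree where
  | leaf (lo hi s : ℝ)
  | node (lo hi s : ℝ) (l r : LTree)

namespace LTree

def lo : LTree → ℝ
  | .leaf a _ _ => a
  | .node a _ _ _ _ => a

def hi : LTree → ℝ
  | .leaf _ h _ => h
  | .node _ h _ _ _ => h

/-- The binary-search property of an LMSR tree. -/
def BSP : LTree → Prop
  | .leaf a h _ => a < h
  | .node a h _ l r =>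
      l.lo = a ∧ l.hi = r.lo ∧ r.hi = h ∧ a < l.hi ∧ l.hi < h ∧ l.BSP ∧ r.BSP

/-- `∏_{z' ∋ x} e^{s_{z'}/b}` over all nodes of the tree containing `x`. -/
noncomputable def prodF (b : ℝ) : LTree → ℝ → ℝ
  | .leaf a h s, x => if a ≤ x ∧ x < h then Real.exp (s / b) else 1
  | .node a h s l r, x =>
      (if a ≤ x ∧ x < h then Real.exp (s / b) else 1) * l.prodF b x * r.prodF b x

/-- The market state at outcome `x`: `θ_x(T) = ∑_{z ∋ x} s_z`. -/
noncomputable def thetaF : LTree → ℝ → ℝ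
  | .leaf a h s, x => if a ≤ x ∧ x < h then s else 0
  | .node a h s l r, x => (if a ≤ x ∧ x < h then s else 0) + l.thetaF x + r.thetaF x

/-- The partial normalization constant of the subtree rooted at `z`. -/
noncomputable def Sval (N : ℕ) (b : ℝ) (T : LTree) : ℝ :=
  (1 / (N : ℝ)) * ∑ j ∈ Finset.range N,
    if T.lo ≤ (j : ℝ) / N ∧ (j : ℝ) / N < T.hi then T.prodF b ((j : ℝ) / N) else 0

end LTree

namespace LTree

lemma prodF_theta_out (b : ℝ) (T : LTree) (x : ℝ) (hB : T.BSP)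
    (h : ¬ (T.lo ≤ x ∧ x < T.hi)) : T.prodF b x = 1 ∧ T.thetaF x = 0 := by
  induction T with
  | leaf a h' s =>
      simp only [prodF, thetaF, lo, hi] at *
      rw [if_neg h, if_neg h]; exact ⟨rfl, rfl⟩
  | node a h' s l r ihl ihr =>
      obtain ⟨hl, hm, hr, h1, h2, hBl, hBr⟩ := hB
      simp only [lo, hi] at h
      have hxl : ¬ (l.lo ≤ x ∧ x < l.hi) := by
        rintro ⟨u, v⟩; exact h ⟨by linarith [hl ▸ u], by linarith⟩
      have hxr : ¬ (r.lo ≤ x ∧ x < r.hi) := by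
        rintro ⟨u, v⟩
        rw [← hm] at u
        exact h ⟨by linarith, by linarith [hr ▸ v]⟩
      obtain ⟨pl, tl⟩ := ihl hBl hxl
      obtain ⟨pr, tr⟩ := ihr hBr hxr
      simp only [prodF, thetaF]
      rw [if_neg h, if_neg h, pl, pr, tl, tr]; norm_num

lemma prodF_theta_in (b : ℝ) (T : LTree) (x : ℝ) (hB : T.BSP)
    (h : T.lo ≤ x ∧ x < T.hi) : T.prodF b x = Real.exp (T.thetaF x / b) := by
  induction T with
  | leaf a h' s =>
      simp only [prodF, thetaF, lo, hi] at *
      rw [if_pos h, if_pos h]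
  | node a h' s l r ihl ihr =>
      obtain ⟨hl, hm, hr, h1, h2, hBl, hBr⟩ := hB
      simp only [lo, hi] at h
      simp only [prodF, thetaF]
      rw [if_pos h, if_pos h]
      by_cases hx : x < l.hi
      · have hin : l.lo ≤ x ∧ x < l.hi := ⟨hl ▸ h.1, hx⟩
        have hout : ¬ (r.lo ≤ x ∧ x < r.hi) := by
          rintro ⟨u, v⟩; rw [← hm] at u; linarith
        obtain ⟨pr, tr⟩ := prodF_theta_out b r x hBr hout
        rw [ihl hBl hin, pr, tr]
        rw [← Real.exp_add]
        ring_nf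
      · have hin : r.lo ≤ x ∧ x < r.hi := ⟨by rw [← hm]; linarith, hr ▸ h.2⟩
        have hout : ¬ (l.lo ≤ x ∧ x < l.hi) := by
          rintro ⟨u, v⟩; exact hx v
        obtain ⟨pl, tl⟩ := prodF_theta_out b l x hBl hout
        rw [ihr hBr hin, pl, tl, mul_one]
        rw [← Real.exp_add]
        ring_nf

end LTree

/-- In an LMSR tree over `Ω = {j/N : j < N}` with root interval `[0,1)`, the root's
partial normalization constant satisfies `N·S_root = ∑_{ω∈Ω} e^{θ_ω(T)/b}`. -/
theorem lmsr_tree_root_normalization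
    (N : ℕ) (hN : 0 < N) (b : ℝ) (hb : 0 < b) (T : LTree)
    (hBSP : T.BSP) (hlo : T.lo = 0) (hhi : T.hi = 1) :
    (N : ℝ) * T.Sval N b = ∑ j ∈ Finset.range N, Real.exp (T.thetaF ((j : ℝ) / N) / b) := by
  rw [LTree.Sval, ← mul_assoc, mul_one_div_cancel (by positivity), one_mul]
  apply Finset.sum_congr rfl
  intro j hj
  rw [Finset.mem_range] at hj
  have hcond : T.lo ≤ (j : ℝ) / N ∧ (j : ℝ) / N < T.hi := by
    rw [hlo, hhi]
    constructor
    · positivity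
    · rw [div_lt_one (by positivity)]; exact_mod_cast hj
  rw [if_pos hcond, LTree.prodF_theta_in b T _ hBSP hcond]
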